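/- Let F_J and F*_J be random functions on [0,1] with F_J(x) − F*_J(x) = Σ_{j=0}^{J} (a_{j,k₀(x)} − a*_{j,k₀(x)}) ∫₀ˣ ψ_{j,k₀(x)}(u)du, where the estimators a_{jk} are unbiased (E[a_{jk}] = a*_{jk}) with Σ_{k<2^j} Var[a_{jk}] ≤ V_j/n_j, the a_{jk} are independent across j, and |∫₀ˣ ψ_{jk}(u)du| ≤ 2^{−j/2−1}. Then E[∫₀¹ |F_J(x) − F*_J(x)| dx] ≤ √( Σ_{j=0}^{J} 2^{−(2j+2)} V_j / n_j ). -/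

import Mathlib

open MeasureTheory ProbabilityTheory Finset

/-- The Haar wavelet function `ψ_{jk}(t) = 2^{j/2} ψ(2^j t - k)`. -/
noncomputable def haar (j k : ℕ) (t : ℝ) : ℝ :=
  if (k : ℝ) / 2 ^ j ≤ t ∧ t < ((k : ℝ) + 1 / 2) / 2 ^ j then (2 : ℝ) ^ ((j : ℝ) / 2)
  else if ((k : ℝ) + 1 / 2) / 2 ^ j ≤ t ∧ t < ((k : ℝ) + 1) / 2 ^ j then
    -(2 : ℝ) ^ ((j : ℝ) / 2)
  else 0

/-- The level-`j` index `k₀(x) = ⌊2^j x⌋` at which `∫₀ˣ ψ_{jk}` can be nonzero. -/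
noncomputable def k₀ (j : ℕ) (x : ℝ) : ℕ := ⌊(2 : ℝ) ^ j * x⌋₊

/-- Bounding the expected estimation error
`E[∫₀¹|F_J(x) - F*_J(x)|dx] ≤ √(Σⱼ 2^{-(2j+2)} Vⱼ/nⱼ)` for unbiased wavelet-coefficient
estimators `a_{jk}` of `a*_{jk}` that are independent across levels `j`, with level-wise
total variance at most `Vⱼ/nⱼ`, where
`F_J(x) - F*_J(x) = Σⱼ (a_{j,k₀(x)} - a*_{j,k₀(x)})∫₀ˣ ψ_{j,k₀(x)}(u)du`. -/
lemma haar_eq_indicator (j k : ℕ) (t : ℝ) :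
    haar j k t =
      Set.indicator (Set.Ico ((k : ℝ) / 2 ^ j) (((k : ℝ) + 1 / 2) / 2 ^ j))
        (fun _ => (2 : ℝ) ^ ((j : ℝ) / 2)) t
      - Set.indicator (Set.Ico (((k : ℝ) + 1 / 2) / 2 ^ j) (((k : ℝ) + 1) / 2 ^ j))
        (fun _ => (2 : ℝ) ^ ((j : ℝ) / 2)) t := by
  simp only [haar, Set.indicator_apply, Set.mem_Ico]
  split_ifs with h1 h2 h3 <;> try ring
  exfalso; linarith [h1.2, h2.1]

lemma integral_indicator_Ico (a b c x : ℝ) (ha : 0 ≤ a) (hx : 0 ≤ x) :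
    ∫ u in (0:ℝ)..x, Set.indicator (Set.Ico a b) (fun _ => c) u
      = c * max (min b x - a) 0 := by
  rw [intervalIntegral.integral_of_le hx]
  have hae : (Set.indicator (Set.Ico a b) (fun _ => c) : ℝ → ℝ)
      =ᵐ[volume.restrict (Set.Ioc 0 x)] Set.indicator (Set.Ioc a b) (fun _ => c) :=
    ae_restrict_of_ae (indicator_ae_eq_of_ae_eq_set Ico_ae_eq_Ioc)
  rw [integral_congr_ae hae, integral_indicator measurableSet_Ioc,
    Measure.restrict_restrict measurableSet_Ioc, setIntegral_const,
    Set.Ioc_inter_Ioc, measureReal_def, Real.volume_Ioc, smul_eq_mul, mul_comm]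
  congr 1
  rw [max_eq_left ha]
  rcases le_total (b ⊓ x - a) 0 with h | h
  · rw [ENNReal.ofReal_of_nonpos h]
    simp [max_eq_right h]
  · rw [ENNReal.toReal_ofReal h, max_eq_left h]

lemma indicator_Ico_intervalIntegrable (a b c x y : ℝ) :
    IntervalIntegrable (Set.indicator (Set.Ico a b) (fun _ => c)) volume x y :=
  (((integrable_indicator_iff measurableSet_Ico).2
    (integrableOn_const measure_Ico_lt_top.ne))).intervalIntegrable

lemma haar_integral (j k : ℕ) {x : ℝ} (hx : 0 ≤ x) :
    ∫ u in (0:ℝ)..x, haar j k u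
      = 2 ^ ((j:ℝ)/2) * (max (min (((k:ℝ)+1/2)/2^j) x - (k:ℝ)/2^j) 0
          - max (min (((k:ℝ)+1)/2^j) x - ((k:ℝ)+1/2)/2^j) 0) := by
  have h1 := integral_indicator_Ico ((k:ℝ)/2^j) (((k:ℝ)+1/2)/2^j) (2^((j:ℝ)/2)) x
    (by positivity) hx
  have h2 := integral_indicator_Ico (((k:ℝ)+1/2)/2^j) (((k:ℝ)+1)/2^j) (2^((j:ℝ)/2)) x
    (by positivity) hx
  rw [intervalIntegral.integral_congr (g := fun t =>
      Set.indicator (Set.Ico ((k : ℝ) / 2 ^ j) (((k : ℝ) + 1 / 2) / 2 ^ j))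
        (fun _ => (2 : ℝ) ^ ((j : ℝ) / 2)) t
      - Set.indicator (Set.Ico (((k : ℝ) + 1 / 2) / 2 ^ j) (((k : ℝ) + 1) / 2 ^ j))
        (fun _ => (2 : ℝ) ^ ((j : ℝ) / 2)) t) (fun t _ => haar_eq_indicator j k t),
    intervalIntegral.integral_sub (indicator_Ico_intervalIntegrable _ _ _ _ _)
      (indicator_Ico_intervalIntegrable _ _ _ _ _), h1, h2]
  ring

lemma haar_integral_sq_le (j k : ℕ) {x : ℝ} (hx : 0 ≤ x) :
    (∫ u in (0:ℝ)..x, haar j k u) ^ 2 ≤ 1 / (4 * 2 ^ j) := by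
  rw [haar_integral j k hx]
  set c := (2:ℝ) ^ ((j:ℝ)/2) with hc_def
  have hc : 0 < c := Real.rpow_pos_of_pos two_pos _
  have h2j : (0:ℝ) < 2 ^ j := by positivity
  have hcsq : c ^ 2 = 2 ^ j := by
    rw [hc_def, ← Real.rpow_natCast (2 ^ ((j:ℝ)/2)) 2, ← Real.rpow_mul two_pos.le]
    norm_num
  set P := max (min (((k:ℝ)+1/2)/2^j) x - (k:ℝ)/2^j) 0 with hP_def
  set Q := max (min (((k:ℝ)+1)/2^j) x - ((k:ℝ)+1/2)/2^j) 0 with hQ_def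
  have hP0 : 0 ≤ P := le_max_right _ _
  have hQ0 : 0 ≤ Q := le_max_right _ _
  have key : ((k:ℝ)+1/2)/2^j - (k:ℝ)/2^j = 1/(2*2^j) := by field_simp; ring
  have key2 : ((k:ℝ)+1)/2^j - ((k:ℝ)+1/2)/2^j = 1/(2*2^j) := by field_simp; ring
  have hP : P ≤ 1/(2*2^j) := by
    apply max_le _ (by positivity)
    have := min_le_left (((k:ℝ)+1/2)/2^j) x
    linarith
  have hQ : Q ≤ 1/(2*2^j) := by
    apply max_le _ (by positivity)
    have := min_le_left (((k:ℝ)+1)/2^j) x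
    linarith
  have hsq : (P - Q)^2 ≤ (1/(2*2^j))^2 := by nlinarith
  calc (c*(P-Q))^2 = c^2 * (P-Q)^2 := by ring
    _ ≤ 2^j * (1/(2*2^j))^2 := by
        rw [hcsq]; exact mul_le_mul_of_nonneg_left hsq h2j.le
    _ = 1/(4*2^j) := by field_simp; ring

lemma haar_integral_abs_le_one (j k : ℕ) {x : ℝ} (hx : 0 ≤ x) :
    |∫ u in (0:ℝ)..x, haar j k u| ≤ 1 := by
  have h := haar_integral_sq_le j k hx
  have h2j : (1:ℝ) ≤ 2 ^ j := one_le_pow₀ one_le_two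
  rw [abs_le_one_iff_mul_self_le_one, ← sq]
  refine h.trans ?_
  rw [div_le_one (by positivity)]
  nlinarith

lemma k₀_lt (j : ℕ) {x : ℝ} (hx0 : 0 ≤ x) (hx1 : x < 1) : k₀ j x < 2 ^ j := by
  have h2j : (0:ℝ) < 2 ^ j := by positivity
  refine (Nat.floor_lt (by positivity)).2 ?_
  push_cast
  nlinarith

lemma k₀_le (j : ℕ) {x : ℝ} (hx1 : x ≤ 1) : k₀ j x ≤ 2 ^ j := by
  have h2j : (0:ℝ) < 2 ^ j := by positivity
  calc k₀ j x = ⌊(2:ℝ)^j * x⌋₊ := rfl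
    _ ≤ ⌊((2^j : ℕ) : ℝ)⌋₊ := by
        apply Nat.floor_le_floor
        push_cast
        nlinarith
    _ = 2 ^ j := Nat.floor_natCast _

lemma k₀_eq (j k : ℕ) {x : ℝ} (h1 : (k:ℝ)/2^j < x) (h2 : x < ((k:ℝ)+1)/2^j) :
    k₀ j x = k := by
  have h2j : (0:ℝ) < 2 ^ j := by positivity
  refine (Nat.floor_eq_iff (by nlinarith [div_nonneg (k.cast_nonneg : (0:ℝ) ≤ k) h2j.le])).2 ?_
  rw [div_lt_iff₀ h2j] at h1
  rw [lt_div_iff₀ h2j] at h2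
  constructor <;> nlinarith

lemma integral_le_sqrt_integral_sq {α : Type*} [MeasurableSpace α] (ν : Measure α)
    [IsProbabilityMeasure ν] {Y : α → ℝ} (hY : MemLp Y 2 ν) (hY0 : 0 ≤ᵐ[ν] Y) :
    ∫ x, Y x ∂ν ≤ Real.sqrt (∫ x, (Y x)^2 ∂ν) := by
  have hconj : (2:ℝ).HolderConjugate 2 := by constructor <;> norm_num
  have h := integral_mul_le_Lp_mul_Lq_of_nonneg hconj hY0
    (ae_of_all _ (fun x => zero_le_one)) (by simpa using hY)
    (g := fun _ => (1:ℝ)) (by simpa using (memLp_const (1:ℝ)))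
  simp only [mul_one] at h
  rw [show ∫ x, (fun _ => (1:ℝ)) x ^ (2:ℝ) ∂ν = 1 by simp] at h
  rw [Real.one_rpow, mul_one] at h
  refine h.trans (le_of_eq ?_)
  rw [Real.sqrt_eq_rpow]
  congr 1
  apply integral_congr_ae
  filter_upwards [hY0] with x hx
  rw [← Real.rpow_natCast (Y x) 2]
  norm_num

lemma variance_sub_const {Ω : Type*} [MeasurableSpace Ω] (μ : Measure Ω)
    [IsProbabilityMeasure μ] {X : Ω → ℝ} (hX : Integrable X μ) (c : ℝ) :
    variance (fun ω => X ω - c) μ = variance X μ := by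
  rw [variance, variance, evariance, evariance]
  have hint : ∫ a, (X a - c) ∂μ = (∫ a, X a ∂μ) - c := by
    rw [integral_sub hX (integrable_const c), integral_const, probReal_univ]
    simp
  congr 1
  apply lintegral_congr
  intro ω
  simp only [hint, sub_sub_sub_cancel_right]

lemma k₀_ae_eq (j k : ℕ) (h : ℕ → ℝ) :
    (fun x => h (k₀ j x))
      =ᵐ[volume.restrict (Set.Ioc ((k:ℝ)/2^j) (((k:ℝ)+1)/2^j))] (fun _ => h k) := by
  have hb : ∀ᵐ x : ℝ ∂volume.restrict (Set.Ioc ((k:ℝ)/2^j) (((k:ℝ)+1)/2^j)),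
      x ≠ ((k:ℝ)+1)/2^j := by
    refine ae_restrict_of_ae ?_
    refine ae_iff.2 ?_
    have : {x : ℝ | ¬x ≠ ((k:ℝ)+1)/2^j} = {((k:ℝ)+1)/2^j} := by
      ext y; simp
    rw [this]
    exact Real.volume_singleton
  filter_upwards [hb, ae_restrict_mem measurableSet_Ioc] with x hxne hxmem
  exact congrArg h (k₀_eq j k hxmem.1 (lt_of_le_of_ne hxmem.2 hxne))

lemma integral_comp_k₀ (j : ℕ) (h : ℕ → ℝ) :
    ∫ x in Set.Ioc (0:ℝ) 1, h (k₀ j x) = (∑ k ∈ range (2^j), h k) / 2^j := by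
  have h2j : (0:ℝ) < 2^j := by positivity
  have key : ∀ k : ℕ, ∫ x in ((k:ℝ)/2^j)..(((k:ℝ)+1)/2^j), h (k₀ j x) = h k / 2^j := by
    intro k
    have hab : (k:ℝ)/2^j ≤ ((k:ℝ)+1)/2^j := by
      gcongr
      linarith
    rw [intervalIntegral.integral_of_le hab, integral_congr_ae (k₀_ae_eq j k h),
      setIntegral_const, measureReal_def, Real.volume_Ioc, smul_eq_mul,
      ENNReal.toReal_ofReal (by linarith [sub_nonneg.2 hab])]
    have : ((k:ℝ)+1)/2^j - (k:ℝ)/2^j = 1/2^j := by field_simp; ring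
    rw [this]
    ring
  have hint : ∀ k : ℕ, k < 2^j → IntervalIntegrable (fun x => h (k₀ j x)) volume
      ((fun i : ℕ => (i:ℝ)/2^j) k) ((fun i : ℕ => (i:ℝ)/2^j) (k+1)) := by
    intro k _
    have hab : (k:ℝ)/2^j ≤ ((k+1:ℕ):ℝ)/2^j := by
      gcongr
      push_cast
      linarith
    rw [intervalIntegrable_iff_integrableOn_Ioc_of_le hab]
    have : ((k+1:ℕ):ℝ) = (k:ℝ)+1 := by push_cast; ring
    rw [this]
    exact (integrableOn_const measure_Ioc_lt_top.ne).congr (k₀_ae_eq j k h).symm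
  have hsum := intervalIntegral.sum_integral_adjacent_intervals hint
  have h0 : ((0:ℕ):ℝ)/2^j = 0 := by simp
  have h1 : (((2^j : ℕ)):ℝ)/2^j = 1 := by push_cast; field_simp
  rw [h0, h1] at hsum
  rw [← intervalIntegral.integral_of_le zero_le_one, ← hsum]
  rw [Finset.sum_div]
  apply Finset.sum_congr rfl
  intro k _
  have : ((k+1:ℕ):ℝ) = (k:ℝ)+1 := by push_cast; ring
  rw [this, key k]

lemma haar_intervalIntegrable (j k : ℕ) (x y : ℝ) :
    IntervalIntegrable (haar j k) volume x y := by
  have : haar j k = fun t =>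
      Set.indicator (Set.Ico ((k : ℝ) / 2 ^ j) (((k : ℝ) + 1 / 2) / 2 ^ j))
        (fun _ => (2 : ℝ) ^ ((j : ℝ) / 2)) t
      - Set.indicator (Set.Ico (((k : ℝ) + 1 / 2) / 2 ^ j) (((k : ℝ) + 1) / 2 ^ j))
        (fun _ => (2 : ℝ) ^ ((j : ℝ) / 2)) t := funext (haar_eq_indicator j k)
  rw [this]
  exact (indicator_Ico_intervalIntegrable _ _ _ _ _).sub
    (indicator_Ico_intervalIntegrable _ _ _ _ _)


theorem estimation_error_bound {Ω : Type*} [MeasurableSpace Ω] (μ : Measure Ω)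
    [IsProbabilityMeasure μ] (J : ℕ) (a : ℕ → ℕ → Ω → ℝ) (astar : ℕ → ℕ → ℝ)
    (V n : ℕ → ℝ) (hn : ∀ j, 0 < n j)
    (hmeas : ∀ j k, Measurable (a j k))
    (hL2 : ∀ j k, MemLp (a j k) 2 μ)
    (hunbiased : ∀ j ≤ J, ∀ k < 2 ^ j, ∫ ω, a j k ω ∂μ = astar j k)
    (hvar : ∀ j ≤ J, ∑ k ∈ range (2 ^ j), variance (a j k) μ ≤ V j / n j)
    (hindep : iIndepFun (m := fun _ : ℕ => (inferInstance : MeasurableSpace (ℕ → ℝ)))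
      (fun j ω k => a j k ω) μ) :
    (∫ ω, (∫ x in (0 : ℝ)..1,
        |∑ j ∈ range (J + 1),
            (a j (k₀ j x) ω - astar j (k₀ j x)) * ∫ u in (0 : ℝ)..x, haar j (k₀ j x) u|) ∂μ)
      ≤ Real.sqrt (∑ j ∈ range (J + 1), (2 : ℝ) ^ (-(2 * (j : ℝ) + 2)) * V j / n j) := by
  classical
  set ν : Measure ℝ := volume.restrict (Set.Ioc (0:ℝ) 1) with hν
  haveI hνprob : IsProbabilityMeasure ν :=
    ⟨by rw [hν, Measure.restrict_apply_univ, Real.volume_Ioc]; norm_num⟩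
  set C : ℕ → ℝ → ℝ := fun j x => ∫ u in (0:ℝ)..x, haar j (k₀ j x) u with hC
  set f : Ω → ℝ → ℝ := fun ω x =>
    |∑ j ∈ range (J + 1), (a j (k₀ j x) ω - astar j (k₀ j x)) * C j x| with hf
  set g : ℝ → ℝ := fun x =>
    ∑ j ∈ range (J + 1), (1/(4*2^j)) * variance (a j (k₀ j x)) μ with hg
  -- basic measurability
  have hk₀ : ∀ j, Measurable (k₀ j) := fun j => (measurable_id.const_mul _).nat_floor
  have hCmeas : ∀ j, Measurable (C j) := by
    intro j
    simp only [hC]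
    have h1 : ∀ k : ℕ, Continuous (fun x : ℝ => ∫ u in (0:ℝ)..x, haar j k u) := fun k =>
      intervalIntegral.continuous_primitive (fun c d => haar_intervalIntegrable j k c d) 0
    have h2 : Measurable (fun p : ℝ × ℕ => ∫ u in (0:ℝ)..p.1, haar j p.2 u) :=
      measurable_from_prod_countable_left (fun k => (h1 k).measurable)
    show Measurable ((fun p : ℝ × ℕ => ∫ u in (0:ℝ)..p.1, haar j p.2 u) ∘
      (fun x : ℝ => (x, k₀ j x)))
    exact h2.comp (measurable_id.prodMk (hk₀ j))
  have hax : ∀ j, Measurable (fun p : Ω × ℝ => a j (k₀ j p.2) p.1) := by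
    intro j
    have h1 : Measurable (fun q : Ω × ℕ => a j q.2 q.1) :=
      measurable_from_prod_countable_left (fun k => hmeas j k)
    show Measurable ((fun q : Ω × ℕ => a j q.2 q.1) ∘ (fun p : Ω × ℝ => (p.1, k₀ j p.2)))
    exact h1.comp (measurable_fst.prodMk ((hk₀ j).comp measurable_snd))
  have hfmeas : Measurable (fun p : Ω × ℝ => f p.1 p.2) := by
    simp only [hf]
    apply Measurable.abs
    apply Finset.measurable_sum
    intro j _
    exact ((hax j).sub ((measurable_from_nat (f := astar j)).comp
      ((hk₀ j).comp measurable_snd))).mul ((hCmeas j).comp measurable_snd)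
  -- uniform integrable bound in ω
  set G : Ω → ℝ := fun ω =>
    ∑ j ∈ range (J + 1), ∑ k ∈ range (2 ^ j + 1), (|a j k ω| + |astar j k|) with hG
  have hGint : Integrable G μ := by
    simp only [hG]
    exact integrable_finset_sum _ (fun j _ => integrable_finset_sum _ (fun k _ =>
      (((hL2 j k).integrable one_le_two).abs).add (integrable_const _)))
  have hCle1 : ∀ j : ℕ, ∀ x : ℝ, 0 ≤ x → |C j x| ≤ 1 := by
    intro j x hx
    simp only [hC]
    exact haar_integral_abs_le_one j _ hx
  have hbound : ∀ ω : Ω, ∀ x ∈ Set.Ioc (0:ℝ) 1, |f ω x| ≤ G ω := by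
    intro ω x hx
    simp only [hf]
    rw [abs_abs]
    calc |∑ j ∈ range (J + 1), (a j (k₀ j x) ω - astar j (k₀ j x)) * C j x|
        ≤ ∑ j ∈ range (J + 1), |(a j (k₀ j x) ω - astar j (k₀ j x)) * C j x| :=
          Finset.abs_sum_le_sum_abs _ _
      _ ≤ ∑ j ∈ range (J + 1), (|a j (k₀ j x) ω| + |astar j (k₀ j x)|) := by
          apply Finset.sum_le_sum
          intro j _
          rw [abs_mul]
          calc |a j (k₀ j x) ω - astar j (k₀ j x)| * |C j x|
              ≤ (|a j (k₀ j x) ω| + |astar j (k₀ j x)|) * 1 := by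
                apply mul_le_mul (abs_sub _ _) (hCle1 j x hx.1.le) (abs_nonneg _)
                positivity
            _ = |a j (k₀ j x) ω| + |astar j (k₀ j x)| := mul_one _
      _ ≤ G ω := by
          simp only [hG]
          apply Finset.sum_le_sum
          intro j _
          apply Finset.single_le_sum (f := fun k => |a j k ω| + |astar j k|)
            (fun k _ => by positivity)
          exact Finset.mem_range.2 (Nat.lt_succ_of_le (k₀_le j hx.2))
  -- Fubini
  have haeIoc : ∀ᵐ p : Ω × ℝ ∂(μ.prod ν), p.2 ∈ Set.Ioc (0:ℝ) 1 := by
    apply ae_iff.2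
    have hset : {p : Ω × ℝ | ¬p.2 ∈ Set.Ioc (0:ℝ) 1} = Set.univ ×ˢ (Set.Ioc (0:ℝ) 1)ᶜ := by
      ext p; simp
    rw [hset, Measure.prod_prod, hν, Measure.restrict_apply measurableSet_Ioc.compl,
      Set.compl_inter_self]
    simp
  have hintf : Integrable (Function.uncurry f) (μ.prod ν) := by
    apply Integrable.mono' (hGint.mul_prod (integrable_const (1:ℝ)))
      hfmeas.aestronglyMeasurable
    filter_upwards [haeIoc] with p hp
    rw [Real.norm_eq_abs]
    simpa [Function.uncurry] using hbound p.1 p.2 hp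
  have hswap : ∫ ω, ∫ x, f ω x ∂ν ∂μ = ∫ x, ∫ ω, f ω x ∂μ ∂ν :=
    integral_integral_swap hintf
  -- pointwise (in x) bound via independence
  have keyA : ∀ x ∈ Set.Ioo (0:ℝ) 1, ∫ ω, f ω x ∂μ ≤ Real.sqrt (g x) := by
    intro x hx
    set Z : Ω → ℝ := fun ω =>
      ∑ j ∈ range (J + 1), (a j (k₀ j x) ω - astar j (k₀ j x)) * C j x with hZdef
    have hterm_mem : ∀ j ∈ range (J + 1),
        MemLp (fun ω => (a j (k₀ j x) ω - astar j (k₀ j x)) * C j x) 2 μ := by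
      intro j _
      have h1 := ((hL2 j (k₀ j x)).sub (memLp_const (astar j (k₀ j x)))).const_mul (C j x)
      have heq : (fun ω => (a j (k₀ j x) ω - astar j (k₀ j x)) * C j x)
          = fun ω => C j x * (a j (k₀ j x) ω - astar j (k₀ j x)) := by
        funext ω; ring
      rw [heq]
      exact h1
    have hsumeq : (∑ i ∈ range (J + 1),
        fun ω => (a i (k₀ i x) ω - astar i (k₀ i x)) * C i x) = Z := by
      funext ω
      rw [hZdef]
      simp [Finset.sum_apply]
    have hZmem : MemLp Z 2 μ := by
      have h := memLp_finsetSum' (range (J + 1)) hterm_mem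
      rwa [hsumeq] at h
    have hEterm : ∀ j ∈ range (J + 1),
        ∫ ω, (a j (k₀ j x) ω - astar j (k₀ j x)) * C j x ∂μ = 0 := by
      intro j hj
      rw [integral_mul_const, integral_sub ((hL2 j _).integrable one_le_two)
        (integrable_const _), integral_const, probReal_univ,
        hunbiased j (Nat.lt_succ_iff.1 (Finset.mem_range.1 hj)) _ (k₀_lt j hx.1.le hx.2)]
      simp
    have hEZ : ∫ ω, Z ω ∂μ = 0 := by
      rw [hZdef, integral_finset_sum _
        (fun j hj => ((hterm_mem j hj).integrable one_le_two))]
      exact Finset.sum_eq_zero hEterm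
    have hpind : Set.Pairwise ↑(range (J + 1)) (fun i j : ℕ =>
        IndepFun (fun ω => (a i (k₀ i x) ω - astar i (k₀ i x)) * C i x)
          (fun ω => (a j (k₀ j x) ω - astar j (k₀ j x)) * C j x) μ) := by
      intro i _ j _ hij
      have hbase : IndepFun (fun ω k => a i k ω) (fun ω k => a j k ω) μ :=
        hindep.indepFun hij
      have hφ : ∀ m : ℕ,
          Measurable (fun v : ℕ → ℝ => (v (k₀ m x) - astar m (k₀ m x)) * C m x) :=
        fun m => ((measurable_pi_apply _).sub measurable_const).mul_const _
      show IndepFun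
        ((fun v : ℕ → ℝ => (v (k₀ i x) - astar i (k₀ i x)) * C i x) ∘ (fun ω k => a i k ω))
        ((fun v : ℕ → ℝ => (v (k₀ j x) - astar j (k₀ j x)) * C j x) ∘ (fun ω k => a j k ω)) μ
      exact hbase.comp (hφ i) (hφ j)
    have hVarZ : variance Z μ
        = ∑ j ∈ range (J + 1),
            variance (fun ω => (a j (k₀ j x) ω - astar j (k₀ j x)) * C j x) μ := by
      have h := IndepFun.variance_sum hterm_mem hpind
      rwa [hsumeq] at h
    have hVarTerm : ∀ j ∈ range (J + 1),
        variance (fun ω => (a j (k₀ j x) ω - astar j (k₀ j x)) * C j x) μ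
          ≤ (1/(4*2^j)) * variance (a j (k₀ j x)) μ := by
      intro j _
      have heq : (fun ω => (a j (k₀ j x) ω - astar j (k₀ j x)) * C j x)
          = fun ω => C j x * (a j (k₀ j x) ω - astar j (k₀ j x)) := by
        funext ω; ring
      have hCsq : C j x ^ 2 ≤ 1/(4*2^j) := by
        simp only [hC]
        exact haar_integral_sq_le j (k₀ j x) hx.1.le
      rw [heq, variance_const_mul, variance_sub_const μ ((hL2 j _).integrable one_le_two)]
      exact mul_le_mul_of_nonneg_right hCsq (variance_nonneg _ _)
    have h2 : ∫ ω, |Z ω| ∂μ ≤ Real.sqrt (∫ ω, |Z ω|^2 ∂μ) :=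
      integral_le_sqrt_integral_sq μ hZmem.abs (ae_of_all _ (fun ω => abs_nonneg _))
    have h3 : ∫ ω, |Z ω|^2 ∂μ = variance Z μ := by
      simp_rw [sq_abs]
      rw [variance_eq_sub hZmem, hEZ]
      simp
    have h4 : variance Z μ ≤ g x := by
      rw [hVarZ, hg]
      exact Finset.sum_le_sum hVarTerm
    calc ∫ ω, f ω x ∂μ = ∫ ω, |Z ω| ∂μ := by simp only [hf, hZdef]
      _ ≤ Real.sqrt (∫ ω, |Z ω|^2 ∂μ) := h2
      _ = Real.sqrt (variance Z μ) := by rw [h3]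
      _ ≤ Real.sqrt (g x) := Real.sqrt_le_sqrt h4
  -- properties of g
  have hg0 : ∀ x, 0 ≤ g x := by
    intro x
    simp only [hg]
    exact Finset.sum_nonneg (fun j _ => mul_nonneg (by positivity) (variance_nonneg _ _))
  have hgmeas : Measurable g := by
    simp only [hg]
    exact Finset.measurable_sum _ (fun j _ =>
      ((measurable_from_nat (f := fun k => variance (a j k) μ)).comp (hk₀ j)).const_mul _)
  set B : ℝ := ∑ j ∈ range (J + 1), ∑ k ∈ range (2 ^ j + 1), variance (a j k) μ with hB
  have hgB : ∀ x ∈ Set.Ioc (0:ℝ) 1, g x ≤ B := by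
    intro x hx
    simp only [hg, hB]
    apply Finset.sum_le_sum
    intro j _
    have h1 : (1:ℝ) ≤ 2^j := one_le_pow₀ one_le_two
    calc (1/(4*2^j)) * variance (a j (k₀ j x)) μ
        ≤ 1 * variance (a j (k₀ j x)) μ := by
          apply mul_le_mul_of_nonneg_right _ (variance_nonneg _ _)
          rw [div_le_one (by positivity)]
          linarith
      _ = variance (a j (k₀ j x)) μ := one_mul _
      _ ≤ ∑ k ∈ range (2 ^ j + 1), variance (a j k) μ :=
          Finset.single_le_sum (f := fun k => variance (a j k) μ)
            (fun k _ => variance_nonneg _ _)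
            (Finset.mem_range.2 (Nat.lt_succ_of_le (k₀_le j hx.2)))
  have haeIocν : ∀ᵐ x : ℝ ∂ν, x ∈ Set.Ioc (0:ℝ) 1 := by
    rw [hν]; exact ae_restrict_mem measurableSet_Ioc
  have hsqrtg_mem : MemLp (fun x => Real.sqrt (g x)) 2 ν := by
    apply MemLp.of_bound hgmeas.sqrt.aestronglyMeasurable (Real.sqrt B)
    filter_upwards [haeIocν] with x hx
    rw [Real.norm_eq_abs, abs_of_nonneg (Real.sqrt_nonneg _)]
    exact Real.sqrt_le_sqrt (hgB x hx)
  have hgint_base : ∀ j, Integrable (fun x => variance (a j (k₀ j x)) μ) ν := by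
    intro j
    apply MemLp.integrable le_rfl
    apply MemLp.of_bound
      ((measurable_from_nat (f := fun k => variance (a j k) μ)).comp
        (hk₀ j)).aestronglyMeasurable
      (∑ k ∈ range (2 ^ j + 1), variance (a j k) μ)
    filter_upwards [haeIocν] with x hx
    simp only [Function.comp_apply, Real.norm_eq_abs]
    rw [abs_of_nonneg (variance_nonneg _ _)]
    exact Finset.single_le_sum (f := fun k => variance (a j k) μ)
      (fun k _ => variance_nonneg _ _)
      (Finset.mem_range.2 (Nat.lt_succ_of_le (k₀_le j hx.2)))
  have haeIoo : ∀ᵐ x : ℝ ∂ν, x ∈ Set.Ioo (0:ℝ) 1 := by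
    have h2 : ∀ᵐ x : ℝ ∂ν, x ≠ 1 := by
      rw [hν]
      apply ae_restrict_of_ae
      refine ae_iff.2 ?_
      have : {x : ℝ | ¬x ≠ 1} = {1} := by ext y; simp
      rw [this]
      exact Real.volume_singleton
    filter_upwards [haeIocν, h2] with x hx hne
    exact ⟨hx.1, lt_of_le_of_ne hx.2 hne⟩
  have stepB : ∫ x, ∫ ω, f ω x ∂μ ∂ν ≤ ∫ x, Real.sqrt (g x) ∂ν := by
    apply integral_mono_of_nonneg
    · refine ae_of_all _ fun x => integral_nonneg fun ω => ?_
      simp only [hf]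
      positivity
    · exact hsqrtg_mem.integrable one_le_two
    · filter_upwards [haeIoo] with x hx using keyA x hx
  have stepC : ∫ x, Real.sqrt (g x) ∂ν ≤ Real.sqrt (∫ x, g x ∂ν) := by
    have h := integral_le_sqrt_integral_sq ν hsqrtg_mem
      (ae_of_all _ fun x => Real.sqrt_nonneg _)
    rwa [show ∫ x, Real.sqrt (g x) ^ 2 ∂ν = ∫ x, g x ∂ν from
      integral_congr_ae (ae_of_all _ fun x => Real.sq_sqrt (hg0 x))] at h
  have stepD : ∫ x, g x ∂ν ≤ ∑ j ∈ range (J + 1), (2:ℝ) ^ (-(2*(j:ℝ)+2)) * V j / n j := by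
    have hrwg : ∫ x, g x ∂ν
        = ∑ j ∈ range (J + 1),
            (1/(4*2^j)) * ((∑ k ∈ range (2 ^ j), variance (a j k) μ) / 2 ^ j) := by
      simp only [hg]
      rw [integral_finset_sum _ (fun j _ => (hgint_base j).const_mul _)]
      apply Finset.sum_congr rfl
      intro j _
      rw [integral_const_mul]
      congr 1
      rw [hν]
      exact integral_comp_k₀ j (fun k => variance (a j k) μ)
    rw [hrwg]
    apply Finset.sum_le_sum
    intro j hj
    have hS : ∑ k ∈ range (2 ^ j), variance (a j k) μ ≤ V j / n j :=
      hvar j (Nat.lt_succ_iff.1 (Finset.mem_range.1 hj))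
    have h2j : (0:ℝ) < 2 ^ j := by positivity
    have hpow : (2:ℝ) ^ (-(2*(j:ℝ)+2)) = 1/(4*2^j*2^j) := by
      have h1 : -(2*(j:ℝ)+2) = -(((2*j+2 : ℕ) : ℝ)) := by push_cast; ring
      rw [h1, Real.rpow_neg two_pos.le, Real.rpow_natCast,
        show (2:ℝ) ^ (2*j+2) = 4*2^j*2^j by rw [two_mul, pow_add, pow_add]; ring]
      rw [one_div]
    calc (1/(4*2^j)) * ((∑ k ∈ range (2 ^ j), variance (a j k) μ) / 2 ^ j)
        = (∑ k ∈ range (2 ^ j), variance (a j k) μ) * (1/(4*2^j*2^j)) := by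
          field_simp
      _ ≤ (V j / n j) * (1/(4*2^j*2^j)) :=
          mul_le_mul_of_nonneg_right hS (by positivity)
      _ = (2:ℝ) ^ (-(2*(j:ℝ)+2)) * V j / n j := by
          rw [hpow]; ring
  -- assemble
  have hrw : ∀ ω : Ω, (∫ x in (0 : ℝ)..1,
      |∑ j ∈ range (J + 1),
          (a j (k₀ j x) ω - astar j (k₀ j x)) * ∫ u in (0 : ℝ)..x, haar j (k₀ j x) u|)
        = ∫ x, f ω x ∂ν := by
    intro ω
    rw [intervalIntegral.integral_of_le zero_le_one]
  rw [integral_congr_ae (ae_of_all _ hrw), hswap]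
  calc ∫ x, ∫ ω, f ω x ∂μ ∂ν ≤ ∫ x, Real.sqrt (g x) ∂ν := stepB
    _ ≤ Real.sqrt (∫ x, g x ∂ν) := stepC
    _ ≤ Real.sqrt (∑ j ∈ range (J + 1), (2:ℝ) ^ (-(2*(j:ℝ)+2)) * V j / n j) :=
        Real.sqrt_le_sqrt stepD
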